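/- Let d ≥ 1, σ̄ ∈ (−d,1) and r̄ > 0. Let {σ_n} ⊂ (−d,1) with σ_n → σ̄ and {r_n} ⊂ (0,+∞) with r_n → r̄. Let E ⊆ ℝ^d and E_n ⊆ ℝ^d be measurable sets of finite Lebesgue measure with χ_{E_n} → χ_E strongly in L¹(ℝ^d). Then: (i) for every x ∈ ℝ^d, j^{σ_n}_{r_n}(x,E_n) → j^{σ̄}_{r̄}(x,E) as n → ∞; (ii) Ĵ^{σ_n}_{r_n}(E_n) → Ĵ^{σ̄}_{r̄}(E) as n → ∞. -/

import Mathlib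

open MeasureTheory Metric Filter Topology ENNReal
open scoped symmDiff

noncomputable section

abbrev Rd (d : ℕ) := EuclideanSpace ℝ (Fin d)

/-- Lebesgue measure of the unit ball in `ℝ^d`. -/
def omegaD (d : ℕ) : ℝ := (volume (ball (0 : Rd d) 1)).toReal

/-- The kernel `|x-y|^{-(d+σ)}`. -/
def kerH (d : ℕ) (σ : ℝ) (x y : Rd d) : ℝ := ‖x - y‖ ^ (-((d : ℝ) + σ))

/-- `J^σ_r(E) = -∫_E ∫_{E∖B_r(x)} |x-y|^{-(d+σ)} dy dx`. -/
def Jfun (d : ℕ) (σ r : ℝ) (E : Set (Rd d)) : ℝ :=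
  -∫ x in E, ∫ y in E \ ball x r, kerH d σ x y

/-- The renormalization constant `γ^σ_ρ`. -/
def gam (d : ℕ) (σ ρ : ℝ) : ℝ :=
  if σ = 0 then d * omegaD d * Real.log ρ else d * omegaD d * (1 - ρ ^ (-σ)) / σ

/-- `Ĵ^σ_r(E) = J^σ_r(E) - γ^σ_r |E|`. -/
def Jhat (d : ℕ) (σ r : ℝ) (E : Set (Rd d)) : ℝ :=
  Jfun d σ r E - gam d σ r * (volume E).toReal

/-- `j^σ_r(x,E) = -∫_{E∖B_r(x)} |x-y|^{-(d+σ)} dy - γ^σ_r`. -/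
def jfun (d : ℕ) (σ r : ℝ) (x : Rd d) (E : Set (Rd d)) : ℝ :=
  -(∫ y in E \ ball x r, kerH d σ x y) - gam d σ r

namespace JAux

/-- uniform bound for the kernel off balls of radius `≥ ρ0`. -/
def Mbd (d : ℕ) (ρ0 : ℝ) : ℝ := max 1 ((min ρ0 1) ^ (-((d : ℝ) + 1)))

lemma one_le_Mbd (d : ℕ) (ρ0 : ℝ) : 1 ≤ Mbd d ρ0 := le_max_left _ _

lemma Mbd_nonneg (d : ℕ) (ρ0 : ℝ) : 0 ≤ Mbd d ρ0 := zero_le_one.trans (one_le_Mbd d ρ0)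

lemma rpow_le_Mbd {d : ℕ} {σ t ρ0 : ℝ} (hσ1 : -(d : ℝ) < σ) (hσ2 : σ < 1)
    (hρ0 : 0 < ρ0) (ht : ρ0 ≤ t) : t ^ (-((d : ℝ) + σ)) ≤ Mbd d ρ0 := by
  have hρ1 : 0 < min ρ0 1 := lt_min hρ0 one_pos
  rcases le_or_gt 1 t with h1 | h1
  · exact le_trans (Real.rpow_le_one_of_one_le_of_nonpos h1 (by linarith)) (le_max_left _ _)
  · refine le_trans ?_ (le_max_right _ _)
    have h2 : t ^ (-((d : ℝ) + σ)) ≤ (min ρ0 1) ^ (-((d : ℝ) + σ)) :=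
      Real.rpow_le_rpow_of_nonpos hρ1 (le_trans (min_le_left _ _) ht) (by linarith)
    exact h2.trans (Real.rpow_le_rpow_of_exponent_ge hρ1 (min_le_right _ _) (by linarith))

lemma kerH_nonneg (d : ℕ) (σ : ℝ) (x y : Rd d) : 0 ≤ kerH d σ x y :=
  Real.rpow_nonneg (norm_nonneg _) _

lemma kerH_le {d : ℕ} {σ ρ0 ρ : ℝ} (hσ1 : -(d : ℝ) < σ) (hσ2 : σ < 1)
    (hρ0 : 0 < ρ0) (hρ : ρ0 ≤ ρ) {x y : Rd d} (hy : y ∉ ball x ρ) :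
    kerH d σ x y ≤ Mbd d ρ0 := by
  simp only [mem_ball, not_lt, dist_eq_norm] at hy
  rw [norm_sub_rev] at hy
  exact rpow_le_Mbd hσ1 hσ2 hρ0 (hρ.trans hy)

lemma measurable_kerH (d : ℕ) (σ : ℝ) (x : Rd d) : Measurable (fun y => kerH d σ x y) := by
  unfold kerH; fun_prop

lemma inner_eq_indicator (d : ℕ) (σ ρ : ℝ) {E : Set (Rd d)} (hE : MeasurableSet E) (x : Rd d) :
    ∫ y in E \ ball x ρ, kerH d σ x y
      = ∫ y, Set.indicator {p : Rd d × Rd d | p.2 ∈ E ∧ ρ ≤ dist p.1 p.2}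
          (fun p => kerH d σ p.1 p.2) (x, y) := by
  rw [← integral_indicator (hE.diff measurableSet_ball)]
  refine integral_congr_ae (ae_of_all _ fun y => ?_)
  have hiff : y ∈ E \ ball x ρ ↔ (x, y) ∈ {p : Rd d × Rd d | p.2 ∈ E ∧ ρ ≤ dist p.1 p.2} := by
    simp [Set.mem_diff, mem_ball, not_lt, dist_comm]
  by_cases h : y ∈ E \ ball x ρ
  · rw [Set.indicator_of_mem h]; exact (Set.indicator_of_mem (hiff.mp h) (fun p : Rd d × Rd d => kerH d σ p.1 p.2)).symm
  · rw [Set.indicator_of_notMem h]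
    exact (Set.indicator_of_notMem (fun hc => h (hiff.mpr hc)) (fun p : Rd d × Rd d => kerH d σ p.1 p.2)).symm

lemma measurable_inner (d : ℕ) (σ ρ : ℝ) {E : Set (Rd d)} (hE : MeasurableSet E) :
    Measurable (fun x : Rd d => ∫ y in E \ ball x ρ, kerH d σ x y) := by
  have hS : MeasurableSet {p : Rd d × Rd d | p.2 ∈ E ∧ ρ ≤ dist p.1 p.2} := by
    rw [Set.setOf_and]
    exact (measurable_snd hE).inter
      (measurableSet_le measurable_const (measurable_fst.dist measurable_snd))
  have hg : Measurable (fun p : Rd d × Rd d => kerH d σ p.1 p.2) := by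
    unfold kerH; fun_prop
  have hF : StronglyMeasurable
      (Set.indicator {p : Rd d × Rd d | p.2 ∈ E ∧ ρ ≤ dist p.1 p.2}
        (fun p => kerH d σ p.1 p.2)) := (hg.indicator hS).stronglyMeasurable
  have h2 : StronglyMeasurable fun x : Rd d =>
      ∫ y, Set.indicator {p : Rd d × Rd d | p.2 ∈ E ∧ ρ ≤ dist p.1 p.2}
        (fun p => kerH d σ p.1 p.2) (x, y) ∂(volume : Measure (Rd d)) :=
    hF.integral_prod_right'
  have := h2.measurable
  rw [show (fun x : Rd d => ∫ y in E \ ball x ρ, kerH d σ x y)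
      = fun x => ∫ y, Set.indicator {p : Rd d × Rd d | p.2 ∈ E ∧ ρ ≤ dist p.1 p.2}
          (fun p => kerH d σ p.1 p.2) (x, y) from funext (inner_eq_indicator d σ ρ hE)]
  exact this

lemma abs_inner_le (d : ℕ) {σ ρ0 ρ : ℝ} (hσ1 : -(d : ℝ) < σ) (hσ2 : σ < 1)
    (hρ0 : 0 < ρ0) (hρ : ρ0 ≤ ρ) {A : Set (Rd d)} (hA : MeasurableSet A)
    (hAfin : volume A < ⊤) (x : Rd d) :
    |∫ y in A \ ball x ρ, kerH d σ x y| ≤ Mbd d ρ0 * (volume A).toReal := by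
  have h1 : ‖∫ y in A \ ball x ρ, kerH d σ x y‖
      ≤ Mbd d ρ0 * (volume (A \ ball x ρ)).toReal := by
    refine norm_setIntegral_le_of_norm_le_const
      (lt_of_le_of_lt (measure_mono Set.diff_subset) hAfin) ?_
    intro y hy
    rw [Real.norm_eq_abs, abs_of_nonneg (kerH_nonneg d σ x y)]
    exact kerH_le hσ1 hσ2 hρ0 hρ hy.2
  rw [Real.norm_eq_abs] at h1
  exact h1.trans (mul_le_mul_of_nonneg_left
    (ENNReal.toReal_mono hAfin.ne (measure_mono Set.diff_subset)) (Mbd_nonneg d ρ0))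

/-- Generic: difference of set integrals of a bounded function over two sets. -/
lemma abs_setIntegral_sub_le {α : Type*} [MeasurableSpace α] {μ : Measure α} {f : α → ℝ} {M : ℝ}
    (hf : AEStronglyMeasurable f μ) (hM : ∀ y, ‖f y‖ ≤ M) {A B : Set α}
    (hA : MeasurableSet A) (hB : MeasurableSet B) (hAfin : μ A < ⊤) (hBfin : μ B < ⊤) :
    |(∫ y in A, f y ∂μ) - ∫ y in B, f y ∂μ| ≤ M * (μ (A ∆ B)).toReal := by
  have hint : ∀ S : Set α, μ S < ⊤ → IntegrableOn f S μ := fun S hS =>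
    Measure.integrableOn_of_bounded hS.ne hf (ae_of_all _ hM)
  have hABfin : μ (A \ B) < ⊤ := lt_of_le_of_lt (measure_mono Set.diff_subset) hAfin
  have hBAfin : μ (B \ A) < ⊤ := lt_of_le_of_lt (measure_mono Set.diff_subset) hBfin
  have hIfin : μ (A ∩ B) < ⊤ := lt_of_le_of_lt (measure_mono Set.inter_subset_left) hAfin
  have hsplitA : ∫ y in A, f y ∂μ = (∫ y in A \ B, f y ∂μ) + ∫ y in A ∩ B, f y ∂μ := by
    rw [← setIntegral_union (Set.disjoint_left.mpr fun y hy hy2 => hy.2 hy2.2) (hA.inter hB)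
      (hint _ hABfin) (hint _ hIfin), Set.diff_union_inter]
  have hsplitB : ∫ y in B, f y ∂μ = (∫ y in B \ A, f y ∂μ) + ∫ y in A ∩ B, f y ∂μ := by
    have hU : B \ A ∪ A ∩ B = B := by rw [Set.inter_comm]; exact Set.diff_union_inter B A
    rw [← setIntegral_union (Set.disjoint_left.mpr fun y hy hy2 => hy.2 hy2.1) (hA.inter hB)
      (hint _ hBAfin) (hint _ hIfin), hU]
  have h1 : ‖∫ y in A \ B, f y ∂μ‖ ≤ M * (μ (A \ B)).toReal :=
    norm_setIntegral_le_of_norm_le_const hABfin (fun y _ => hM y)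
  have h2 : ‖∫ y in B \ A, f y ∂μ‖ ≤ M * (μ (B \ A)).toReal :=
    norm_setIntegral_le_of_norm_le_const hBAfin (fun y _ => hM y)
  have hsymm : (μ (A ∆ B)).toReal = (μ (A \ B)).toReal + (μ (B \ A)).toReal := by
    rw [Set.symmDiff_def, measure_union disjoint_sdiff_sdiff (hB.diff hA),
      ENNReal.toReal_add hABfin.ne hBAfin.ne]
  rw [hsplitA, hsplitB, hsymm]
  rw [Real.norm_eq_abs] at h1 h2
  have := abs_sub (∫ y in A \ B, f y ∂μ) (∫ y in B \ A, f y ∂μ)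
  calc |(∫ y in A \ B, f y ∂μ) + (∫ y in A ∩ B, f y ∂μ)
        - ((∫ y in B \ A, f y ∂μ) + ∫ y in A ∩ B, f y ∂μ)|
      = |(∫ y in A \ B, f y ∂μ) - ∫ y in B \ A, f y ∂μ| := by ring_nf
    _ ≤ |∫ y in A \ B, f y ∂μ| + |∫ y in B \ A, f y ∂μ| := abs_sub _ _
    _ ≤ M * (μ (A \ B)).toReal + M * (μ (B \ A)).toReal := add_le_add h1 h2
    _ = M * ((μ (A \ B)).toReal + (μ (B \ A)).toReal) := by ring

lemma abs_inner_sub_inner_le (d : ℕ) {σ ρ0 ρ : ℝ} (hσ1 : -(d : ℝ) < σ) (hσ2 : σ < 1)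
    (hρ0 : 0 < ρ0) (hρ : ρ0 ≤ ρ) {A B : Set (Rd d)} (hA : MeasurableSet A)
    (hB : MeasurableSet B) (hAfin : volume A < ⊤) (hBfin : volume B < ⊤) (x : Rd d) :
    |(∫ y in A \ ball x ρ, kerH d σ x y) - ∫ y in B \ ball x ρ, kerH d σ x y|
      ≤ Mbd d ρ0 * (volume (A ∆ B)).toReal := by
  set f : Rd d → ℝ := Set.indicator (ball x ρ)ᶜ (fun y => kerH d σ x y) with hf
  have hre : ∀ S : Set (Rd d), (∫ y in S, f y) = ∫ y in S \ ball x ρ, kerH d σ x y := by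
    intro S
    rw [hf, setIntegral_indicator measurableSet_ball.compl, ← Set.diff_eq]
  have hMb : ∀ y, ‖f y‖ ≤ Mbd d ρ0 := by
    intro y
    rw [hf]
    by_cases h : y ∈ (ball x ρ)ᶜ
    · rw [Set.indicator_of_mem h]
      rw [Real.norm_eq_abs, abs_of_nonneg (kerH_nonneg d σ x y)]
      exact kerH_le hσ1 hσ2 hρ0 hρ h
    · rw [Set.indicator_of_notMem h]
      simpa using zero_le_one.trans (one_le_Mbd d ρ0)
  have hfm : AEStronglyMeasurable f volume :=
    ((measurable_kerH d σ x).indicator measurableSet_ball.compl).aestronglyMeasurable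
  rw [← hre A, ← hre B]
  exact abs_setIntegral_sub_le hfm hMb hA hB hAfin hBfin

/-- `(1 - e^{-t})/t`, extended by `1` at `0`. -/
def psi (t : ℝ) : ℝ := if t = 0 then 1 else (1 - Real.exp (-t)) / t

lemma continuousAt_psi (t : ℝ) : ContinuousAt psi t := by
  rcases eq_or_ne t 0 with rfl | ht
  · have hd : HasDerivAt (fun s : ℝ => 1 - Real.exp (-s)) 1 0 := by
      have h1 : HasDerivAt (fun s : ℝ => Real.exp (-s)) (-1) 0 := by
        have := (Real.hasDerivAt_exp (-0)).comp 0 (hasDerivAt_neg 0)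
        simpa [Function.comp_def] using this
      simpa using h1.const_sub 1
    have h2 : Tendsto (slope (fun s : ℝ => 1 - Real.exp (-s)) 0) (𝓝[≠] 0) (𝓝 1) :=
      hasDerivAt_iff_tendsto_slope.mp hd
    have h3 : Tendsto psi (𝓝[≠] 0) (𝓝 1) := by
      refine h2.congr' ?_
      filter_upwards [self_mem_nhdsWithin] with s hs
      have hs' : s ≠ 0 := hs
      rw [slope_def_field, psi, if_neg hs']
      simp
    have h4 : Tendsto psi (pure (0 : ℝ)) (𝓝 1) := by
      have := tendsto_pure_nhds psi 0
      simpa [psi] using this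
    have h5 : Tendsto psi (𝓝[≠] (0:ℝ) ⊔ pure 0) (𝓝 1) := by
      rw [tendsto_sup]; exact ⟨h3, h4⟩
    rw [nhdsNE_sup_pure] at h5
    have : psi 0 = 1 := by simp [psi]
    rw [ContinuousAt, this]
    exact h5
  · have hcont : ContinuousAt (fun s : ℝ => (1 - Real.exp (-s)) / s) t :=
      ((continuousAt_const.sub (Real.continuous_exp.continuousAt.comp
        (continuous_neg.continuousAt))).div continuousAt_id ht)
    refine hcont.congr ?_
    filter_upwards [eventually_ne_nhds ht] with s hs
    rw [psi, if_neg hs]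

lemma gam_eq (d : ℕ) {σ ρ : ℝ} (hρ : 0 < ρ) :
    gam d σ ρ = d * omegaD d * (psi (σ * Real.log ρ) * Real.log ρ) := by
  rcases eq_or_ne σ 0 with rfl | hσ
  · simp [gam, psi]
  · rw [gam, if_neg hσ]
    rcases eq_or_ne (Real.log ρ) 0 with hl | hl
    · have hρ1 : ρ = 1 := by
        have h := Real.exp_log hρ
        rw [hl, Real.exp_zero] at h
        exact h.symm
      simp [hρ1, psi, hσ]
    · have hψ : psi (σ * Real.log ρ) =
          (1 - Real.exp (-(σ * Real.log ρ))) / (σ * Real.log ρ) := by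
        rw [psi, if_neg (mul_ne_zero hσ hl)]
      have hrw : ρ ^ (-σ) = Real.exp (-(σ * Real.log ρ)) := by
        rw [Real.rpow_def_of_pos hρ]
        ring_nf
      rw [hψ, hrw]
      field_simp


lemma inner_tendsto {d : ℕ} (hd : 1 ≤ d) {σb rb : ℝ} (hrb : 0 < rb)
    {σ : ℕ → ℝ} (hσ : ∀ n, -(d : ℝ) < σ n ∧ σ n < 1) (hσconv : Tendsto σ atTop (𝓝 σb))
    {r : ℕ → ℝ} (hrconv : Tendsto r atTop (𝓝 rb))
    {E : Set (Rd d)} (hE : MeasurableSet E) (hEfin : volume E < ⊤) (x : Rd d) :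
    Tendsto (fun n => ∫ y in E \ ball x (r n), kerH d (σ n) x y) atTop
      (𝓝 (∫ y in E \ ball x rb, kerH d σb x y)) := by
  haveI : Nonempty (Fin d) := ⟨⟨0, hd⟩⟩
  haveI : Nontrivial (Rd d) := by
    refine ⟨⟨EuclideanSpace.single ⟨0, hd⟩ (1 : ℝ), 0, fun h => ?_⟩⟩
    have := congrArg (fun v : Rd d => v ⟨0, hd⟩) h
    simp [EuclideanSpace.single_apply] at this
  set F : ℕ → Rd d → ℝ := fun n => (E \ ball x (r n)).indicator (fun y => kerH d (σ n) x y)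
    with hF
  have hre : ∀ n, (∫ y in E \ ball x (r n), kerH d (σ n) x y) = ∫ y, F n y :=
    fun n => (integral_indicator (hE.diff measurableSet_ball)).symm
  have hre0 : (∫ y in E \ ball x rb, kerH d σb x y)
      = ∫ y, (E \ ball x rb).indicator (fun y => kerH d σb x y) y :=
    (integral_indicator (hE.diff measurableSet_ball)).symm
  rw [hre0]
  refine Tendsto.congr (fun n => (hre n).symm) ?_
  refine tendsto_integral_filter_of_dominated_convergence
    (E.indicator fun _ => Mbd d (rb / 2)) ?_ ?_ ?_ ?_
  · exact Eventually.of_forall fun n =>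
      ((measurable_kerH d (σ n) x).indicator (hE.diff measurableSet_ball)).aestronglyMeasurable
  · have hhalf : ∀ᶠ n in atTop, rb / 2 ≤ r n :=
      (hrconv.eventually_const_lt (by linarith)).mono fun n h => h.le
    filter_upwards [hhalf] with n hn
    refine ae_of_all _ fun y => ?_
    show ‖(E \ ball x (r n)).indicator (fun y => kerH d (σ n) x y) y‖
      ≤ E.indicator (fun _ => Mbd d (rb / 2)) y
    by_cases hy : y ∈ E \ ball x (r n)
    · rw [Set.indicator_of_mem hy, Set.indicator_of_mem hy.1, Real.norm_eq_abs,
        abs_of_nonneg (kerH_nonneg _ _ _ _)]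
      exact kerH_le (hσ n).1 (hσ n).2 (by linarith) hn hy.2
    · rw [Set.indicator_of_notMem hy, norm_zero]
      by_cases hyE : y ∈ E
      · rw [Set.indicator_of_mem hyE]; exact Mbd_nonneg d _
      · rw [Set.indicator_of_notMem hyE]
  · rw [integrable_indicator_iff hE]
    exact integrableOn_const hEfin.ne
  · have hsph : ∀ᵐ y : Rd d, y ∉ sphere x rb := by
      rw [← measure_eq_zero_iff_ae_notMem]
      exact Measure.addHaar_sphere volume x rb
    filter_upwards [hsph] with y hy
    have hne : dist y x ≠ rb := by simpa [mem_sphere, dist_eq_norm] using hy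
    rcases hne.lt_or_gt with hlt | hgt
    · have hlim0 : (E \ ball x rb).indicator (fun y => kerH d σb x y) y = 0 :=
        Set.indicator_of_notMem (fun hc => hc.2 (mem_ball.mpr hlt)) _
      rw [hlim0]
      have hev : ∀ᶠ n in atTop, F n y = 0 := by
        filter_upwards [hrconv.eventually_const_lt hlt] with n hn
        exact Set.indicator_of_notMem (fun hc => hc.2 (mem_ball.mpr hn)) _
      exact Tendsto.congr' (by filter_upwards [hev] with n hn; exact hn.symm) tendsto_const_nhds
    · by_cases hyE : y ∈ E
      · have hnorm : (0 : ℝ) < ‖x - y‖ := by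
          rw [norm_sub_rev, ← dist_eq_norm]; linarith
        have hmem : y ∈ E \ ball x rb :=
          ⟨hyE, fun hc => absurd (mem_ball.mp hc) (not_lt.mpr hgt.le)⟩
        have hlim : (E \ ball x rb).indicator (fun y => kerH d σb x y) y = kerH d σb x y :=
          Set.indicator_of_mem hmem (fun y => kerH d σb x y)
        rw [hlim]
        have hev : ∀ᶠ n in atTop, F n y = kerH d (σ n) x y := by
          filter_upwards [hrconv.eventually_lt_const hgt] with n hn
          have hmemn : y ∈ E \ ball x (r n) :=
            ⟨hyE, fun hc => absurd (mem_ball.mp hc) (not_lt.mpr hn.le)⟩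
          exact Set.indicator_of_mem hmemn (fun y => kerH d (σ n) x y)
        refine Tendsto.congr' (by filter_upwards [hev] with n hn; exact hn.symm) ?_
        have hexp : Tendsto (fun n => -((d : ℝ) + σ n)) atTop (𝓝 (-((d : ℝ) + σb))) :=
          (tendsto_const_nhds.add hσconv).neg
        have hc := (Real.continuousAt_rpow (‖x - y‖, -((d : ℝ) + σb))
          (Or.inl hnorm.ne')).tendsto
        have := hc.comp (tendsto_const_nhds.prodMk_nhds hexp)
        simpa [kerH, Function.comp_def] using this
      · have hzero : ∀ n, F n y = 0 := fun n =>
          Set.indicator_of_notMem (fun hc => hyE hc.1) _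
        rw [Set.indicator_of_notMem (fun hc : y ∈ E \ ball x rb => hyE hc.1)]
        exact Tendsto.congr (fun n => (hzero n).symm) tendsto_const_nhds

lemma gam_tendsto (d : ℕ) {σb rb : ℝ} (hrb : 0 < rb)
    {σ r : ℕ → ℝ} (hσconv : Tendsto σ atTop (𝓝 σb)) (hr : ∀ n, 0 < r n)
    (hrconv : Tendsto r atTop (𝓝 rb)) :
    Tendsto (fun n => gam d (σ n) (r n)) atTop (𝓝 (gam d σb rb)) := by
  have hlog : Tendsto (fun n => Real.log (r n)) atTop (𝓝 (Real.log rb)) :=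
    (Real.continuousAt_log hrb.ne').tendsto.comp hrconv
  have hψ : Tendsto (fun n => psi (σ n * Real.log (r n))) atTop
      (𝓝 (psi (σb * Real.log rb))) :=
    (continuousAt_psi _).tendsto.comp (hσconv.mul hlog)
  have h := (hψ.mul hlog).const_mul ((d : ℝ) * omegaD d)
  rw [gam_eq d hrb]
  exact Tendsto.congr (fun n => (gam_eq d (hr n)).symm) h

lemma Jhat_eq (d : ℕ) {σ ρ : ℝ} (hσ1 : -(d : ℝ) < σ) (hσ2 : σ < 1) (hρ : 0 < ρ)
    {A : Set (Rd d)} (hA : MeasurableSet A) (hAfin : volume A < ⊤) :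
    Jhat d σ ρ A = ∫ x in A, jfun d σ ρ x A := by
  have hint : IntegrableOn (fun x => ∫ y in A \ ball x ρ, kerH d σ x y) A volume :=
    Measure.integrableOn_of_bounded hAfin.ne (measurable_inner d σ ρ hA).aestronglyMeasurable
      (ae_of_all _ fun x => by
        rw [Real.norm_eq_abs]
        exact abs_inner_le d hσ1 hσ2 hρ le_rfl hA hAfin x)
  simp only [Jhat, Jfun, jfun]
  have h1 : ∫ x in A, ((-∫ y in A \ ball x ρ, kerH d σ x y) - gam d σ ρ)
      = (∫ x in A, -∫ y in A \ ball x ρ, kerH d σ x y) - ∫ _x in A, gam d σ ρ :=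
    integral_sub hint.neg (integrableOn_const hAfin.ne)
  rw [h1, integral_neg, setIntegral_const, smul_eq_mul, measureReal_def]
  ring

end JAux

theorem j_and_Jhat_joint_continuity
    (d : ℕ) (hd : 1 ≤ d)
    (σb : ℝ) (hσb1 : -(d : ℝ) < σb) (hσb2 : σb < 1) (rb : ℝ) (hrb : 0 < rb)
    (σ : ℕ → ℝ) (hσ : ∀ n, -(d : ℝ) < σ n ∧ σ n < 1) (hσconv : Tendsto σ atTop (𝓝 σb))
    (r : ℕ → ℝ) (hr : ∀ n, 0 < r n) (hrconv : Tendsto r atTop (𝓝 rb))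
    (E : Set (Rd d)) (hE : MeasurableSet E) (hEfin : volume E < ⊤)
    (En : ℕ → Set (Rd d)) (hEn : ∀ n, MeasurableSet (En n))
    (hEnfin : ∀ n, volume (En n) < ⊤)
    (hconv : Tendsto (fun n => volume (En n ∆ E)) atTop (𝓝 0)) :
    (∀ x : Rd d,
      Tendsto (fun n => jfun d (σ n) (r n) x (En n)) atTop (𝓝 (jfun d σb rb x E))) ∧
    Tendsto (fun n => Jhat d (σ n) (r n) (En n)) atTop (𝓝 (Jhat d σb rb E)) := by
  have hgam : Tendsto (fun n => gam d (σ n) (r n)) atTop (𝓝 (gam d σb rb)) :=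
    JAux.gam_tendsto d hrb hσconv hr hrconv
  have hhalf : ∀ᶠ n in atTop, rb / 2 ≤ r n :=
    (hrconv.eventually_const_lt (by linarith)).mono fun n h => h.le
  have hvolR : Tendsto (fun n => (volume (En n ∆ E)).toReal) atTop (𝓝 0) := by
    have := (ENNReal.tendsto_toReal (a := 0) (by simp)).comp hconv
    simpa [Function.comp_def] using this
  have hi : ∀ x : Rd d,
      Tendsto (fun n => jfun d (σ n) (r n) x (En n)) atTop (𝓝 (jfun d σb rb x E)) := by
    intro x
    have hIE : Tendsto (fun n => ∫ y in E \ ball x (r n), kerH d (σ n) x y) atTop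
        (𝓝 (∫ y in E \ ball x rb, kerH d σb x y)) :=
      JAux.inner_tendsto hd hrb hσ hσconv hrconv hE hEfin x
    have hdiff : Tendsto (fun n => (∫ y in En n \ ball x (r n), kerH d (σ n) x y)
        - ∫ y in E \ ball x (r n), kerH d (σ n) x y) atTop (𝓝 0) := by
      apply squeeze_zero_norm' (a := fun n => JAux.Mbd d (rb / 2) * (volume (En n ∆ E)).toReal)
      · filter_upwards [hhalf] with n hn
        rw [Real.norm_eq_abs]
        exact JAux.abs_inner_sub_inner_le d (hσ n).1 (hσ n).2 (by linarith) hn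
          (hEn n) hE (hEnfin n) hEfin x
      · simpa using hvolR.const_mul (JAux.Mbd d (rb / 2))
    have hInn : Tendsto (fun n => ∫ y in En n \ ball x (r n), kerH d (σ n) x y) atTop
        (𝓝 (∫ y in E \ ball x rb, kerH d σb x y)) := by
      have := hdiff.add hIE
      simpa using this
    have := hInn.neg.sub hgam
    simpa [jfun] using this
  refine ⟨hi, ?_⟩
  have hEnvol : ∀ᶠ n in atTop, (volume (En n)).toReal ≤ (volume E).toReal + 1 := by
    have h1 : ∀ᶠ n in atTop, (volume (En n ∆ E)).toReal ≤ 1 :=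
      hvolR.eventually_le_const one_pos
    filter_upwards [h1] with n hn
    have hfinΔ : volume (En n ∆ E) < ⊤ := by
      refine lt_of_le_of_lt (measure_mono (fun y hy => ?_))
        (lt_of_le_of_lt (measure_union_le (En n) E) (ENNReal.add_lt_top.mpr ⟨hEnfin n, hEfin⟩))
      rcases Set.mem_symmDiff.mp hy with ⟨h, _⟩ | ⟨h, _⟩
      exacts [Or.inl h, Or.inr h]
    have hsub : En n ⊆ E ∪ (En n ∆ E) := by
      intro y hy
      by_cases h : y ∈ E
      · exact Or.inl h
      · exact Or.inr (Set.mem_symmDiff.mpr (Or.inl ⟨hy, h⟩))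
    have h2 : volume (En n) ≤ volume E + volume (En n ∆ E) :=
      le_trans (measure_mono hsub) (measure_union_le _ _)
    calc (volume (En n)).toReal
        ≤ (volume E + volume (En n ∆ E)).toReal :=
          ENNReal.toReal_mono (ENNReal.add_ne_top.mpr ⟨hEfin.ne, hfinΔ.ne⟩) h2
      _ = (volume E).toReal + (volume (En n ∆ E)).toReal :=
          ENNReal.toReal_add hEfin.ne hfinΔ.ne
      _ ≤ (volume E).toReal + 1 := by linarith
  set M' : ℝ := JAux.Mbd d (rb / 2) * ((volume E).toReal + 1) + (|gam d σb rb| + 1) with hM'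
  have hgbd : ∀ᶠ n in atTop, |gam d (σ n) (r n)| ≤ |gam d σb rb| + 1 :=
    hgam.abs.eventually_le_const (lt_add_one _)
  have hjbd : ∀ᶠ n in atTop, ∀ x, |jfun d (σ n) (r n) x (En n)| ≤ M' := by
    filter_upwards [hhalf, hEnvol, hgbd] with n h1 h2 h3
    intro x
    have hIb := JAux.abs_inner_le d (hσ n).1 (hσ n).2
      (show (0 : ℝ) < rb / 2 by linarith) h1 (hEn n) (hEnfin n) x
    have hmul : JAux.Mbd d (rb / 2) * (volume (En n)).toReal
        ≤ JAux.Mbd d (rb / 2) * ((volume E).toReal + 1) :=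
      mul_le_mul_of_nonneg_left h2 (JAux.Mbd_nonneg d (rb / 2))
    calc |jfun d (σ n) (r n) x (En n)|
        = |(-(∫ y in En n \ ball x (r n), kerH d (σ n) x y)) - gam d (σ n) (r n)| := rfl
      _ ≤ |(-(∫ y in En n \ ball x (r n), kerH d (σ n) x y))| + |gam d (σ n) (r n)| :=
          abs_sub _ _
      _ = |∫ y in En n \ ball x (r n), kerH d (σ n) x y| + |gam d (σ n) (r n)| := by
          rw [abs_neg]
      _ ≤ JAux.Mbd d (rb / 2) * (volume (En n)).toReal + (|gam d σb rb| + 1) :=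
          add_le_add hIb h3
      _ ≤ M' := by rw [hM']; linarith
  have hjm : ∀ n, Measurable fun x : Rd d => jfun d (σ n) (r n) x (En n) := fun n => by
    have hm : Measurable fun x : Rd d =>
        -(∫ y in En n \ ball x (r n), kerH d (σ n) x y) - gam d (σ n) (r n) :=
      ((JAux.measurable_inner d (σ n) (r n) (hEn n)).neg).sub measurable_const
    exact hm
  have hJeq : ∀ n, Jhat d (σ n) (r n) (En n) = ∫ x in En n, jfun d (σ n) (r n) x (En n) :=
    fun n => JAux.Jhat_eq d (hσ n).1 (hσ n).2 (hr n) (hEn n) (hEnfin n)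
  have hJeqb : Jhat d σb rb E = ∫ x in E, jfun d σb rb x E :=
    JAux.Jhat_eq d hσb1 hσb2 hrb hE hEfin
  have h2' : Tendsto (fun n => ∫ x in E, jfun d (σ n) (r n) x (En n)) atTop
      (𝓝 (∫ x in E, jfun d σb rb x E)) := by
    refine tendsto_integral_filter_of_dominated_convergence (fun _ => M') ?_ ?_ ?_ ?_
    · exact Eventually.of_forall fun n => ((hjm n).aestronglyMeasurable).restrict
    · filter_upwards [hjbd] with n hn
      exact ae_of_all _ fun x => by rw [Real.norm_eq_abs]; exact hn x
    · exact integrableOn_const hEfin.ne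
    · exact ae_of_all _ fun x => hi x
  have h1' : Tendsto (fun n => (∫ x in En n, jfun d (σ n) (r n) x (En n))
      - ∫ x in E, jfun d (σ n) (r n) x (En n)) atTop (𝓝 0) := by
    apply squeeze_zero_norm' (a := fun n => M' * (volume (En n ∆ E)).toReal)
    · filter_upwards [hjbd] with n hn
      rw [Real.norm_eq_abs]
      exact JAux.abs_setIntegral_sub_le ((hjm n).aestronglyMeasurable)
        (fun y => by rw [Real.norm_eq_abs]; exact hn y) (hEn n) hE (hEnfin n) hEfin
    · simpa using hvolR.const_mul M'
  have hfinal := h1'.add h2'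
  rw [hJeqb]
  refine Tendsto.congr (fun n => (hJeq n).symm) ?_
  simpa using hfinal
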